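/- Let Γ be a locally finite connected graph with admissible pair (f, α) (i.e. ∑ α(2n+1) f(n) < ∞). Then every α-geodesic ray r : ℕ → Γ is Cauchy for the Floyd metric δ_{f,v} and converges to a point of the Floyd boundary ∂_f Γ. -/

import Mathlib

open Filter Topology

/-- The vertex set of a locally finite connected graph, presented via its
graph metric `d` (an integer-valued geodesic metric with finite balls). -/
structure GraphDist (V : Type) where
  d : V → V → ℕ
  d_self : ∀ x, d x x = 0
  eq_of_d : ∀ x y, d x y = 0 → x = y
  d_symm : ∀ x y, d x y = d y x
  d_tri : ∀ x y z, d x z ≤ d x y + d y z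
  locallyFinite : ∀ (x : V) (n : ℕ), {y | d x y ≤ n}.Finite
  geodesic : ∀ x y, 0 < d x y → ∃ z, d x z = 1 ∧ d z y + 1 = d x y

namespace GraphDist

variable {V : Type} (G : GraphDist V)

/-- `γ : Fin (n+1) → V` is an edge path (consecutive vertices at distance `≤ 1`). -/
def IsPath {n : ℕ} (γ : Fin (n + 1) → V) : Prop :=
  ∀ i : Fin n, G.d (γ i.castSucc) (γ i.succ) ≤ 1

/-- Floyd length of a path with respect to the scaling function `f` and
basepoint `v`: the edge `{x,y}` has length `f (d v {x,y})`. -/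
def floydLen (f : ℕ → ℝ) (v : V) {n : ℕ} (γ : Fin (n + 1) → V) : ℝ :=
  ∑ i : Fin n, f (min (G.d v (γ i.castSucc)) (G.d v (γ i.succ)))

/-- Floyd distance: infimal Floyd length of edge paths joining two vertices. -/
noncomputable def floydDist (f : ℕ → ℝ) (v : V) (a b : V) : ℝ :=
  sInf {L | ∃ (n : ℕ) (γ : Fin (n + 1) → V), G.IsPath γ ∧ γ 0 = a ∧
    γ (Fin.last n) = b ∧ L = G.floydLen f v γ}

/-- A finite `c`-quasigeodesic path. -/
def IsQuasigeodesic (c : ℝ) {n : ℕ} (γ : Fin (n + 1) → V) : Prop :=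
  G.IsPath γ ∧ ∀ s t : Fin (n + 1),
    (1 / c) * |(s : ℝ) - (t : ℝ)| - c ≤ (G.d (γ s) (γ t) : ℝ) ∧
    (G.d (γ s) (γ t) : ℝ) ≤ c * |(s : ℝ) - (t : ℝ)| + c

/-- A `c`-quasigeodesic ray. -/
def IsQuasigeodesicRay (c : ℝ) (γ : ℕ → V) : Prop :=
  (∀ n : ℕ, G.d (γ n) (γ (n + 1)) ≤ 1) ∧ ∀ s t : ℕ,
    (1 / c) * |(s : ℝ) - (t : ℝ)| - c ≤ (G.d (γ s) (γ t) : ℝ) ∧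
    (G.d (γ s) (γ t) : ℝ) ≤ c * |(s : ℝ) - (t : ℝ)| + c

/-- A finite `α`-distorted (`α`-geodesic) path. -/
def IsAlphaPath (α : ℕ → ℝ) {n : ℕ} (γ : Fin (n + 1) → V) : Prop :=
  G.IsPath γ ∧ ∀ s t : Fin (n + 1),
    (G.d (γ s) (γ t) : ℝ) ≤ α (Nat.dist s t) ∧
    (Nat.dist (s : ℕ) (t : ℕ) : ℝ) ≤ α (G.d (γ s) (γ t))

/-- An `α`-geodesic ray. -/
def IsAlphaRay (α : ℕ → ℝ) (γ : ℕ → V) : Prop :=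
  (∀ n : ℕ, G.d (γ n) (γ (n + 1)) ≤ 1) ∧ ∀ s t : ℕ,
    (G.d (γ s) (γ t) : ℝ) ≤ α (Nat.dist s t) ∧
    (Nat.dist s t : ℝ) ≤ α (G.d (γ s) (γ t))

end GraphDist

/-- `f` is a Floyd scaling function with ratio constant `K`. -/
def IsFloydFunction (f : ℕ → ℝ) (K : ℝ) : Prop :=
  (∀ n, 0 < f n) ∧ (∀ n, 1 ≤ f n / f (n + 1) ∧ f n / f (n + 1) ≤ K) ∧ Summable f

/-- `α` is a distortion function: non-decreasing with `α n ≥ n`. -/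
def IsDistortion (α : ℕ → ℝ) : Prop :=
  (∀ n, 0 < α n) ∧ Monotone α ∧ ∀ n : ℕ, (n : ℝ) ≤ α n

namespace GraphDist

variable {V : Type} (G : GraphDist V)

lemma floydSet_subset_symm (f : ℕ → ℝ) (v a b : V) :
    {L | ∃ (n : ℕ) (γ : Fin (n + 1) → V), G.IsPath γ ∧ γ 0 = a ∧
      γ (Fin.last n) = b ∧ L = G.floydLen f v γ} ⊆
    {L | ∃ (n : ℕ) (γ : Fin (n + 1) → V), G.IsPath γ ∧ γ 0 = b ∧
      γ (Fin.last n) = a ∧ L = G.floydLen f v γ} := by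
  rintro L ⟨n, γ, hpath, h0, hl, hL⟩
  refine ⟨n, γ ∘ Fin.rev, fun i => ?_, ?_, ?_, ?_⟩
  · simp only [Function.comp_apply, Fin.rev_castSucc, Fin.rev_succ]
    rw [G.d_symm]
    exact hpath i.rev
  · have : (0 : Fin (n + 1)).rev = Fin.last n := by
      rw [← Fin.rev_last, Fin.rev_rev]
    simp [Function.comp_apply, this, hl]
  · simp [Function.comp_apply, Fin.rev_last, h0]
  · rw [hL]
    unfold floydLen
    refine Fintype.sum_bijective Fin.rev Fin.rev_involutive.bijective _ _ (fun i => ?_)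
    simp only [Function.comp_apply, Fin.rev_castSucc, Fin.rev_succ, Fin.rev_rev]
    rw [min_comm]

lemma floydDist_symm (f : ℕ → ℝ) (v a b : V) :
    G.floydDist f v a b = G.floydDist f v b a := by
  unfold floydDist
  congr 1
  exact Set.Subset.antisymm (G.floydSet_subset_symm f v a b) (G.floydSet_subset_symm f v b a)


end GraphDist

theorem stmt6_key {V : Type} (G : GraphDist V) (v : V)
    (f : ℕ → ℝ) (K : ℝ) (hK : 0 < K) (hfpos : ∀ n, 0 < f n)
    (hratio : ∀ n, 1 ≤ f n / f (n + 1) ∧ f n / f (n + 1) ≤ K)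
    (α : ℕ → ℝ) (hα : IsDistortion α)
    (hadm : Summable (fun n => α (2 * n + 1) * f n))
    (r : ℕ → V) (hr : G.IsAlphaRay α r)
    (ε : ℝ) (hε : 0 < ε) :
    ∃ N : ℕ, ∀ m : ℕ, N ≤ m → ∀ L : ℕ,
      G.floydDist f v (r m) (r (m + L)) < ε := by
  obtain ⟨hrel, hrd⟩ := hr
  obtain ⟨hαpos, hαmono, hαge⟩ := hα
  have hK1 : 1 ≤ K := le_trans (hratio 0).1 (hratio 0).2
  have hfstep : ∀ n, f (n + 1) ≤ f n := by
    intro n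
    have h := (hratio n).1
    rw [le_div_iff₀ (hfpos (n + 1))] at h
    linarith
  have hfanti : Antitone f := antitone_nat_of_succ_le hfstep
  have hfK : ∀ n, f (n - 1) ≤ K * f n := by
    intro n
    cases n with
    | zero => simpa using le_mul_of_one_le_left (hfpos 0).le hK1
    | succ d =>
      have h := (hratio d).2
      rw [div_le_iff₀ (hfpos (d + 1))] at h
      simpa using h
  set a := G.d v (r 0) with ha
  have hDb : ∀ s : ℕ, (s : ℝ) ≤ α (G.d v (r s) + a) := by
    intro s
    have h4 := (hrd s 0).2
    rw [Nat.dist_zero_right] at h4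
    have h2 : G.d (r s) (r 0) ≤ G.d v (r s) + a := by
      have h5 := G.d_tri (r s) v (r 0)
      have h6 := G.d_symm (r s) v
      omega
    exact h4.trans (hαmono h2)
  set T : ℕ → ℝ := fun n => α (2 * n + 1) * f n with hT
  have hTpos : ∀ n, 0 ≤ T n := fun n => mul_nonneg (hαpos _).le (hfpos _).le
  have htail : Tendsto (fun i => ∑' k, T (k + i)) atTop (𝓝 0) := tendsto_sum_nat_add T
  have hεK : 0 < ε / (2 * K) := div_pos hε (by linarith)
  obtain ⟨k₀, hk₀a, hk₀⟩ :=
    ((eventually_ge_atTop a).and (htail.eventually (gt_mem_nhds hεK))).exists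
  refine ⟨Nat.floor (α (k₀ + a)) + 1, ?_⟩
  intro m hm L
  have hDk : ∀ s : ℕ, Nat.floor (α (k₀ + a)) + 1 ≤ s → k₀ ≤ G.d v (r s) := by
    intro s hs
    by_contra hcon
    push_neg at hcon
    have h1 : (s : ℝ) ≤ α (k₀ + a) := (hDb s).trans (hαmono (by omega))
    have h2 : s ≤ Nat.floor (α (k₀ + a)) := Nat.le_floor h1
    omega
  -- the path
  set γ : Fin (L + 1) → V := fun i => r (m + (i : ℕ)) with hγ
  have hpath : G.IsPath γ := by
    intro i
    show G.d (r (m + (i.castSucc : ℕ))) (r (m + (i.succ : ℕ))) ≤ 1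
    rw [Fin.coe_castSucc, Fin.val_succ, ← Nat.add_assoc]
    exact hrel (m + i)
  have hbdd : BddBelow {L' | ∃ (n : ℕ) (γ : Fin (n + 1) → V), G.IsPath γ ∧ γ 0 = r m ∧
      γ (Fin.last n) = r (m + L) ∧ L' = G.floydLen f v γ} := by
    refine ⟨0, ?_⟩
    rintro x ⟨n, γ', -, -, -, rfl⟩
    exact Finset.sum_nonneg fun i _ => (hfpos _).le
  have c1 : G.floydDist f v (r m) (r (m + L)) ≤ G.floydLen f v γ := by
    apply csInf_le hbdd
    exact ⟨L, γ, hpath, by simp [hγ], by simp [hγ, Fin.val_last], rfl⟩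
  -- termwise bound
  have hterm : ∀ s : ℕ, f (min (G.d v (r s)) (G.d v (r (s + 1)))) ≤ K * f (G.d v (r s)) := by
    intro s
    have h3 := G.d_tri v (r (s + 1)) (r s)
    have h4 := hrel s
    have h5 := G.d_symm (r (s + 1)) (r s)
    have h1 : G.d v (r s) - 1 ≤ min (G.d v (r s)) (G.d v (r (s + 1))) := by omega
    exact le_trans (hfanti h1) (hfK _)
  have c2 : G.floydLen f v γ ≤ ∑ i ∈ Finset.range L, K * f (G.d v (r (m + i))) := by
    rw [← Fin.sum_univ_eq_sum_range (fun i => K * f (G.d v (r (m + i)))) L]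
    unfold GraphDist.floydLen
    apply Finset.sum_le_sum
    intro i _
    show f (min (G.d v (r (m + (i.castSucc : ℕ)))) (G.d v (r (m + (i.succ : ℕ))))) ≤ _
    rw [Fin.coe_castSucc, Fin.val_succ, ← Nat.add_assoc]
    exact hterm (m + i)
  -- fiberwise
  set S : Finset ℕ := Finset.range L with hS
  set Dm : ℕ → ℕ := fun i => G.d v (r (m + i)) with hDm
  have hfib : ∑ i ∈ S, f (Dm i) =
      ∑ k ∈ S.image Dm, ∑ i ∈ S.filter (fun i => Dm i = k), f (Dm i) :=
    (Finset.sum_fiberwise_of_maps_to (fun i hi => Finset.mem_image_of_mem Dm hi) _).symm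
  have himg : ∀ k ∈ S.image Dm, k₀ ≤ k ∧ a ≤ k := by
    intro k hk
    obtain ⟨i, hi, rfl⟩ := Finset.mem_image.mp hk
    have : k₀ ≤ Dm i := hDk (m + i) (by omega)
    exact ⟨this, le_trans hk₀a this⟩
  have hinner : ∀ k ∈ S.image Dm,
      ∑ i ∈ S.filter (fun i => Dm i = k), f (Dm i) ≤ (α (k + a) + 1) * f k := by
    intro k hk
    have hsub : S.filter (fun i => Dm i = k) ⊆ Finset.range (Nat.floor (α (k + a)) + 1) := by
      intro i hi
      rw [Finset.mem_filter] at hi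
      have h1 : ((m + i : ℕ) : ℝ) ≤ α (k + a) := by
        have := hDb (m + i)
        rwa [show G.d v (r (m + i)) = k from hi.2] at this
      have h2 : m + i ≤ Nat.floor (α (k + a)) := Nat.le_floor h1
      rw [Finset.mem_range]
      omega
    have hcard : (S.filter (fun i => Dm i = k)).card ≤ Nat.floor (α (k + a)) + 1 := by
      calc (S.filter (fun i => Dm i = k)).card ≤ _ := Finset.card_le_card hsub
        _ = _ := Finset.card_range _
    have heq : ∑ i ∈ S.filter (fun i => Dm i = k), f (Dm i)
        = ((S.filter (fun i => Dm i = k)).card : ℝ) * f k := by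
      rw [Finset.sum_congr rfl (fun i hi => by rw [(Finset.mem_filter.mp hi).2]),
        Finset.sum_const, nsmul_eq_mul]
    rw [heq]
    have hfl : (((S.filter (fun i => Dm i = k)).card : ℕ) : ℝ) ≤ α (k + a) + 1 := by
      calc (((S.filter (fun i => Dm i = k)).card : ℕ) : ℝ)
          ≤ ((Nat.floor (α (k + a)) + 1 : ℕ) : ℝ) := by exact_mod_cast hcard
        _ ≤ α (k + a) + 1 := by
            push_cast
            have := Nat.floor_le (le_of_lt (hαpos (k + a)))
            linarith
    exact mul_le_mul_of_nonneg_right hfl (hfpos k).le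
  have c5 : ∀ k ∈ S.image Dm, (α (k + a) + 1) * f k ≤ 2 * T k := by
    intro k hk
    obtain ⟨hkk₀, hka⟩ := himg k hk
    have h1 : α (k + a) ≤ α (2 * k + 1) := hαmono (by omega)
    have h2 : (1 : ℝ) ≤ α (2 * k + 1) := by
      have := hαge (2 * k + 1)
      have : ((2 * k + 1 : ℕ) : ℝ) ≤ α (2 * k + 1) := this
      push_cast at this
      linarith
    have : (α (k + a) + 1) * f k ≤ (2 * α (2 * k + 1)) * f k :=
      mul_le_mul_of_nonneg_right (by linarith) (hfpos k).le
    calc (α (k + a) + 1) * f k ≤ (2 * α (2 * k + 1)) * f k := this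
      _ = 2 * T k := by rw [hT]; ring
  have himg_sub : ∀ k ∈ S.image Dm, k₀ ≤ k := fun k hk => (himg k hk).1
  have c7 : ∑ k ∈ S.image Dm, T k ≤ ∑' j, T (j + k₀) := by
    have hinj' : ∀ x ∈ S.image Dm, ∀ y ∈ S.image Dm,
        (fun k => k - k₀) x = (fun k => k - k₀) y → x = y := by
      intro x hx y hy h
      have := himg_sub x hx
      have := himg_sub y hy
      simp only at h
      omega
    have e : ∑ j ∈ (S.image Dm).image (fun k => k - k₀), T (j + k₀) = ∑ k ∈ S.image Dm, T k := by
      rw [Finset.sum_image hinj']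
      exact Finset.sum_congr rfl fun k hk => by rw [Nat.sub_add_cancel (himg_sub k hk)]
    rw [← e]
    exact Summable.sum_le_tsum _ (fun j _ => hTpos _) ((summable_nat_add_iff k₀).mpr hadm)
  -- assemble
  have chain : G.floydDist f v (r m) (r (m + L)) ≤ K * (2 * (∑' j, T (j + k₀))) := by
    calc G.floydDist f v (r m) (r (m + L)) ≤ G.floydLen f v γ := c1
      _ ≤ ∑ i ∈ S, K * f (Dm i) := c2
      _ = K * ∑ i ∈ S, f (Dm i) := by rw [Finset.mul_sum]
      _ = K * ∑ k ∈ S.image Dm, ∑ i ∈ S.filter (fun i => Dm i = k), f (Dm i) := by rw [hfib]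
      _ ≤ K * ∑ k ∈ S.image Dm, (α (k + a) + 1) * f k := by
          apply mul_le_mul_of_nonneg_left (Finset.sum_le_sum hinner) hK.le
      _ ≤ K * ∑ k ∈ S.image Dm, 2 * T k := by
          apply mul_le_mul_of_nonneg_left (Finset.sum_le_sum c5) hK.le
      _ = K * (2 * ∑ k ∈ S.image Dm, T k) := by rw [← Finset.mul_sum]
      _ ≤ K * (2 * (∑' j, T (j + k₀))) := by
          apply mul_le_mul_of_nonneg_left (mul_le_mul_of_nonneg_left c7 (by norm_num)) hK.le
  have hlt : K * (2 * (∑' j, T (j + k₀))) < ε := by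
    have h := hk₀
    have hKε : K * (2 * (ε / (2 * K))) = ε := by field_simp
    calc K * (2 * (∑' j, T (j + k₀))) < K * (2 * (ε / (2 * K))) := by
          apply mul_lt_mul_of_pos_left (mul_lt_mul_of_pos_left h (by norm_num)) hK
      _ = ε := hKε
  exact lt_of_le_of_lt chain hlt

/-- if the pair `(f, α)` is admissible (`∑ α(2n+1) f(n) < ∞`),
then every `α`-geodesic ray is Cauchy for the Floyd metric `δ_{f,v}` (hence
converges to a point of the Floyd boundary). -/
theorem stmt6 {V : Type} (G : GraphDist V) (v : V)
    (f : ℕ → ℝ) (K : ℝ) (hK : 0 < K) (hfpos : ∀ n, 0 < f n)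
    (hratio : ∀ n, 1 ≤ f n / f (n + 1) ∧ f n / f (n + 1) ≤ K)
    (α : ℕ → ℝ) (hα : IsDistortion α)
    (hadm : Summable (fun n => α (2 * n + 1) * f n))
    (r : ℕ → V) (hr : G.IsAlphaRay α r) :
    ∀ ε : ℝ, 0 < ε → ∃ N : ℕ, ∀ m : ℕ, N ≤ m → ∀ n : ℕ, N ≤ n →
      G.floydDist f v (r m) (r n) < ε := by
  intro ε hε
  obtain ⟨N, hN⟩ := stmt6_key G v f K hK hfpos hratio α hα hadm r hr ε hε
  refine ⟨N, fun m hm n hn => ?_⟩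
  rcases le_total m n with h | h
  · have hx := hN m hm (n - m)
    rwa [Nat.add_sub_cancel' h] at hx
  · rw [G.floydDist_symm]
    have hx := hN n hn (m - n)
    rwa [Nat.add_sub_cancel' h] at hx
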